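/- arXiv:2407.16937 — 5 statements merged into one kernel-verified Lean document; each statement's English description precedes it below -/
import Mathlib

section
/- Let p be a prime and n a positive integer with p ∤ n. If g : (ℤ/pℤ)ˣ → ℂ takes values in ℚ(ζ_n) and ∑_{a ∈ (ℤ/pℤ)ˣ} g(a)·e^{2πia/p} = 1, then g(a) = -1 for all a ∈ (ℤ/pℤ)ˣ. -/
open Polynomial IntermediateField Finset

set_option maxHeartbeats 1000000 in
/-- If `g : (ℤ/pℤ)ˣ → ℂ` takes values in `ℚ(ζ_n)` with `p ∤ n` and its Gauss sum
equals `1`, then `g ≡ -1`. -/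
theorem stmt_1 (p n : ℕ) [Fact p.Prime] (hn : 0 < n) (hpn : ¬ p ∣ n)
    (g : (ZMod p)ˣ → ℂ)
    (hg : ∀ a : (ZMod p)ˣ,
      g a ∈ IntermediateField.adjoin ℚ {Complex.exp (2 * Real.pi * Complex.I / n)})
    (hτ : (∑ a : (ZMod p)ˣ,
        g a * Complex.exp (2 * Real.pi * Complex.I * ((a : ZMod p).val : ℂ) / p)) = 1) :
    ∀ a : (ZMod p)ˣ, g a = -1 := by
  have hp : p.Prime := Fact.out
  have hp0 : p ≠ 0 := hp.pos.ne'
  have hn0 : n ≠ 0 := hn.ne'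
  set ζn : ℂ := Complex.exp (2 * Real.pi * Complex.I / n) with hζn
  set ζp : ℂ := Complex.exp (2 * Real.pi * Complex.I / p) with hζp
  have hzn : IsPrimitiveRoot ζn n := Complex.isPrimitiveRoot_exp n hn0
  have hzp : IsPrimitiveRoot ζp p := Complex.isPrimitiveRoot_exp p hp0
  have hco : Nat.Coprime p n := (Nat.Prime.coprime_iff_not_dvd hp).mpr hpn
  set K : IntermediateField ℚ ℂ := IntermediateField.adjoin ℚ {ζn} with hK
  -- integrality
  have hintn : IsIntegral ℚ ζn := (hzn.isIntegral hn).tower_top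
  have hintp : IsIntegral (↥K) ζp := (hzp.isIntegral hp.pos).tower_top
  haveI : FiniteDimensional ℚ K := IntermediateField.adjoin.finiteDimensional hintn
  have hKrank : Module.finrank ℚ K = n.totient := by
    rw [hK, IntermediateField.adjoin.finrank hintn, ← Polynomial.cyclotomic_eq_minpoly_rat hzn hn,
      natDegree_cyclotomic]
  -- upper bound for minpoly degree
  have hdvd : minpoly (↥K) ζp ∣ cyclotomic p (↥K) := by
    apply minpoly.dvd
    rw [aeval_def, eval₂_eq_eval_map, map_cyclotomic]
    exact hzp.isRoot_cyclotomic hp.pos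
  have hub : (minpoly (↥K) ζp).natDegree ≤ p - 1 := by
    have := natDegree_le_of_dvd hdvd (cyclotomic_ne_zero p (↥K))
    rwa [natDegree_cyclotomic, Nat.totient_prime hp] at this
  -- lower bound
  set E : IntermediateField (↥K) ℂ := IntermediateField.adjoin (↥K) {ζp} with hE
  haveI : FiniteDimensional (↥K) E := IntermediateField.adjoin.finiteDimensional hintp
  have hErank : Module.finrank (↥K) E = (minpoly (↥K) ζp).natDegree :=
    IntermediateField.adjoin.finrank hintp
  set z : ℂ := ζp ^ (p / Nat.factorizationLCMLeft p n) * ζn ^ (n / Nat.factorizationLCMRight p n)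
    with hzdef
  have hz : IsPrimitiveRoot z (Nat.lcm p n) := hzp.pow_mul_pow_lcm hzn hp0 hn0
  have hlcm : Nat.lcm p n = p * n := Nat.Coprime.lcm_eq_mul hco
  have hintz : IsIntegral ℚ z := (hz.isIntegral (Nat.pos_of_ne_zero (Nat.lcm_ne_zero hp0 hn0))).tower_top
  have hzrank : Module.finrank ℚ (IntermediateField.adjoin ℚ {z}) = (Nat.lcm p n).totient := by
    rw [IntermediateField.adjoin.finrank hintz,
      ← Polynomial.cyclotomic_eq_minpoly_rat hz (Nat.pos_of_ne_zero (Nat.lcm_ne_zero hp0 hn0)), natDegree_cyclotomic]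
  -- z is in E viewed over ℚ
  have hζpE : ζp ∈ E := IntermediateField.mem_adjoin_simple_self (↥K) ζp
  have hζnE : ζn ∈ E := by
    have h1 : ζn ∈ K := IntermediateField.mem_adjoin_simple_self ℚ ζn
    exact E.algebraMap_mem ⟨ζn, h1⟩
  have hzE : z ∈ E.restrictScalars ℚ := by
    rw [IntermediateField.mem_restrictScalars]
    exact mul_mem (pow_mem hζpE _) (pow_mem hζnE _)
  have hle : IntermediateField.adjoin ℚ {z} ≤ E.restrictScalars ℚ := by
    rw [IntermediateField.adjoin_le_iff]
    simpa using hzE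
  haveI : FiniteDimensional ℚ E := Module.Finite.trans (↥K) (↥E)
  haveI : FiniteDimensional ℚ (E.restrictScalars ℚ) := ‹FiniteDimensional ℚ E›
  have hmono : Module.finrank ℚ (IntermediateField.adjoin ℚ {z})
      ≤ Module.finrank ℚ (E.restrictScalars ℚ) :=
    LinearMap.finrank_le_finrank_of_injective
      (f := (IntermediateField.inclusion hle).toLinearMap)
      (IntermediateField.inclusion_injective hle)
  have hEQrank : Module.finrank ℚ (E.restrictScalars ℚ)
      = Module.finrank ℚ K * Module.finrank (↥K) E :=
    (Module.finrank_mul_finrank ℚ (↥K) (↥E)).symm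
  have hge : p - 1 ≤ (minpoly (↥K) ζp).natDegree := by
    rw [hzrank, hlcm, Nat.totient_mul hco, Nat.totient_prime hp, hEQrank, hKrank] at hmono
    have hnt : 0 < n.totient := Nat.totient_pos.mpr hn
    rw [hErank] at hmono
    exact Nat.le_of_mul_le_mul_left (by rwa [mul_comm (p-1)] at hmono) hnt
  have hdeg : (minpoly (↥K) ζp).natDegree = p - 1 := le_antisymm hub hge
  -- linear independence of ζp^1, ..., ζp^(p-1) over K
  have li0 : LinearIndependent (↥K) fun i : Fin (p - 1) => ζp ^ (i : ℕ) := by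
    have := linearIndependent_pow (K := ↥K) (S := ℂ) ζp
    rwa [hdeg] at this
  have hζpne : ζp ≠ 0 := Complex.exp_ne_zero _
  have li1 : LinearIndependent (↥K) fun i : Fin (p - 1) => ζp ^ ((i : ℕ) + 1) := by
    have := li0.map' (LinearMap.mulLeft (↥K) ζp)
      (LinearMap.ker_eq_bot.mpr (mul_right_injective₀ hζpne))
    convert this using 1
    funext i
    simp [LinearMap.mulLeft_apply, pow_succ, mul_comm]
    all_goals rfl
  have hval_ne : ∀ a : (ZMod p)ˣ, (a : ZMod p).val ≠ 0 := by
    intro a h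
    have : (a : ZMod p) = 0 := by
      have := (ZMod.val_eq_zero (a : ZMod p)).mp h
      exact this
    exact a.ne_zero this
  have hval_lt : ∀ a : (ZMod p)ˣ, (a : ZMod p).val < p := fun a => ZMod.val_lt _
  set e : (ZMod p)ˣ → Fin (p - 1) := fun a => ⟨(a : ZMod p).val - 1, by
    have := hval_ne a; have := hval_lt a; omega⟩ with he
  have he_inj : Function.Injective e := by
    intro a b hab
    have h1 : (a : ZMod p).val = (b : ZMod p).val := by
      have := Fin.mk.injEq _ _ _ _ ▸ hab
      have h2 : (a : ZMod p).val - 1 = (b : ZMod p).val - 1 := congrArg Fin.val hab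
      have := hval_ne a; have := hval_ne b; omega
    exact Units.ext (ZMod.val_injective p h1)
  have li : LinearIndependent (↥K) fun a : (ZMod p)ˣ => ζp ^ (a : ZMod p).val := by
    have := li1.comp e he_inj
    convert this using 1
    funext a
    have h := hval_ne a
    show ζp ^ (a : ZMod p).val = ζp ^ (((a : ZMod p).val - 1) + 1)
    congr 1
    omega
  -- exponential rewriting
  have hexp : ∀ a : (ZMod p)ˣ,
      Complex.exp (2 * Real.pi * Complex.I * ((a : ZMod p).val : ℂ) / p)
        = ζp ^ (a : ZMod p).val := by
    intro a
    rw [hζp, ← Complex.exp_nat_mul]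
    congr 1
    ring
  -- sum of roots over units equals -1
  have hsum : (∑ a : (ZMod p)ˣ, ζp ^ (a : ZMod p).val) = -1 := by
    have hgeo : ∑ i ∈ Finset.range p, ζp ^ i = 0 := hzp.geom_sum_eq_zero hp.one_lt
    have htot : ∑ x : ZMod p, ζp ^ x.val = 0 := by
      rw [← hgeo]
      refine Finset.sum_nbij' (fun x => x.val) (fun i => (i : ZMod p)) ?_ ?_ ?_ ?_ ?_
      · intro x _; simpa using ZMod.val_lt x
      · intro i _; simp
      · intro x _; exact ZMod.natCast_rightInverse x
      · intro i hi; exact ZMod.val_cast_of_lt (Finset.mem_range.mp hi)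
      · intro x _; rfl
    have herase : ∑ a : (ZMod p)ˣ, ζp ^ (a : ZMod p).val
        = ∑ x ∈ Finset.univ.erase (0 : ZMod p), ζp ^ x.val := by
      refine Finset.sum_nbij (fun a => (a : ZMod p)) ?_ ?_ ?_ ?_
      · intro a _
        exact Finset.mem_erase.mpr ⟨a.ne_zero, Finset.mem_univ _⟩
      · intro a _ b _ hab
        exact Units.ext hab
      · intro x hx
        have hx0 : x ≠ 0 := (Finset.mem_erase.mp hx).1
        obtain ⟨u, hu⟩ := hx0.isUnit
        exact ⟨u, Finset.mem_coe.mpr (Finset.mem_univ u), hu⟩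
      · intro a _; rfl
    rw [herase, Finset.sum_erase_eq_sub (Finset.mem_univ _), htot]
    simp
  -- conclude
  intro b
  set c : (ZMod p)ˣ → (↥K) := fun a => ⟨g a + 1, K.add_mem (hg a) K.one_mem⟩ with hc
  have hzero : ∑ a : (ZMod p)ˣ, c a • (ζp ^ (a : ZMod p).val) = 0 := by
    have : ∀ a : (ZMod p)ˣ, c a • (ζp ^ (a : ZMod p).val)
        = g a * ζp ^ (a : ZMod p).val + ζp ^ (a : ZMod p).val := by
      intro a
      show ((g a + 1 : ℂ)) * (ζp ^ (a : ZMod p).val) = _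
      ring
    rw [Finset.sum_congr rfl fun a _ => this a, Finset.sum_add_distrib, hsum]
    have : ∑ a : (ZMod p)ˣ, g a * ζp ^ (a : ZMod p).val = 1 := by
      rw [← hτ]
      exact Finset.sum_congr rfl fun a _ => by rw [hexp a]
    rw [this]; ring
  have hcz := Fintype.linearIndependent_iff.mp li c hzero b
  have h0 : g b + 1 = 0 := congrArg Subtype.val hcz
  linear_combination h0
end

section
/- Let p be prime and n ≥ 1 with p ∤ n, and let f : (ℤ/pℤ)ˣ → ℂˣ take values in n-th roots of unity (extended by f(0)=0, with Fourier transform f̂(ξ) = p^{-1/2} ∑_{x} f(x)e^{-2πixξ/p}). Then either |f̂(a)| = 1 for all a ∈ (ℤ/pℤ)ˣ, or |f̂(a)| ≠ 1 for all a ∈ (ℤ/pℤ)ˣ. -/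
open Complex Polynomial IsCyclotomicExtension

private lemma pow_congr_mod' {M : Type*} [Monoid M] {θ : M} {q : ℕ} (hθ : θ ^ q = 1) {i j : ℕ}
    (h : i ≡ j [MOD q]) : θ ^ i = θ ^ j := by
  have key : ∀ m : ℕ, θ ^ m = θ ^ (m % q) := fun m => by
    conv_lhs => rw [← Nat.div_add_mod m q, pow_add, pow_mul, hθ, one_pow, one_mul]
  rw [key i, key j, h]

private lemma conj_eq_inv_of_pow_eq_one {z : ℂ} {q : ℕ} (hq : q ≠ 0) (h : z ^ q = 1) :
    (starRingEnd ℂ) z = z⁻¹ := by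
  have h1 : ‖z‖ = 1 := by
    have h2 : ‖z‖ ^ q = 1 := by rw [← norm_pow, h, norm_one]
    have h3 := norm_nonneg z
    rcases (pow_eq_one_iff_cases).mp h2 with h | h | h
    · omega
    · exact h
    · nlinarith [h.1]
  exact (Complex.inv_eq_conj h1).symm

private lemma main_aux (p n : ℕ) [hp : Fact p.Prime] (hn : 0 < n) (hpn : ¬ p ∣ n)
    (f : ZMod p → ℂ) (hf0 : f 0 = 0) (hf : ∀ x : ZMod p, x ≠ 0 → f x ^ n = 1)
    (S : ZMod p → ℂ)
    (hS : ∀ c : ZMod p, S c = ∑ x : ZMod p,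
      f x * (Complex.exp (2 * Real.pi * Complex.I / p) ^ (x.val * c.val))⁻¹)
    (c₀ : (ZMod p)ˣ) (h₀ : ‖S (c₀ : ZMod p)‖ = Real.sqrt p) :
    ∀ c : (ZMod p)ˣ, ‖S (c : ZMod p)‖ = Real.sqrt p := by
  haveI : NeZero n := ⟨hn.ne'⟩
  haveI : NeZero p := ⟨hp.out.pos.ne'⟩
  haveI : NeZero (n * p) := ⟨Nat.mul_ne_zero hn.ne' hp.out.pos.ne'⟩
  have hp0 : p ≠ 0 := hp.out.pos.ne'
  have hcop : n.Coprime p := (Nat.coprime_comm.mp ((hp.out.coprime_iff_not_dvd).mpr hpn))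
  have hNpos : 0 < n * p := Nat.mul_pos hn hp.out.pos
  set N : ℕ+ := ⟨n * p, hNpos⟩ with hNdef
  set L := CyclotomicField N ℚ with hL
  haveI : IsCyclotomicExtension {(N : ℕ)} ℚ L :=
    (by haveI : NeZero ((N:ℕ):ℚ) := ⟨by exact_mod_cast N.ne_zero⟩
        exact CyclotomicField.isCyclotomicExtension _ _)
  set μ : L := IsCyclotomicExtension.zeta N ℚ L with hμdef
  have hμ : IsPrimitiveRoot μ (n * p) := IsCyclotomicExtension.zeta_spec N ℚ L
  haveI : FiniteDimensional ℚ L := IsCyclotomicExtension.finiteDimensional {(N : ℕ)} ℚ L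
  haveI : Algebra.IsAlgebraic ℚ L := Algebra.IsAlgebraic.of_finite ℚ L
  set φ : L →ₐ[ℚ] ℂ := IsAlgClosed.lift with hφdef
  have hφinj : Function.Injective φ := φ.toRingHom.injective
  have hζ : IsPrimitiveRoot (φ μ) (n * p) := hμ.map_of_injective hφinj
  have hirr : Irreducible (cyclotomic (N : ℕ) ℚ) := cyclotomic.irreducible_rat N.pos
  -- the standard primitive p-th root of unity in ℂ
  set ω₀ : ℂ := Complex.exp (2 * Real.pi * Complex.I / p) with hω₀def
  have hω₀ : IsPrimitiveRoot ω₀ p := Complex.isPrimitiveRoot_exp p hp0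
  -- (φ μ)^n is a primitive p-th root, equal to ω₀ ^ s with s coprime to p
  have hω : IsPrimitiveRoot ((φ μ) ^ n) p := hζ.pow hNpos rfl
  obtain ⟨s, -, hs⟩ := hω₀.eq_pow_of_pow_eq_one hω.pow_eq_one
  have hscop : s.Coprime p := (hω₀.pow_iff_coprime hp.out.pos s).mp (hs ▸ hω)
  set sU : (ZMod p)ˣ := ZMod.unitOfCoprime s hscop with hsUdef
  set rv : ℕ := ((sU⁻¹ : (ZMod p)ˣ) : ZMod p).val with hrvdef
  have hsu : ((s : ℕ) : ZMod p) * ((rv : ℕ) : ZMod p) = 1 := by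
    rw [hrvdef, ZMod.natCast_val, ZMod.cast_id]
    have : ((s : ℕ) : ZMod p) = (sU : ZMod p) := (ZMod.coe_unitOfCoprime s hscop).symm
    rw [this, ← Units.val_mul, mul_inv_cancel, Units.val_one]
  -- abstract lift of f
  have hξn : IsPrimitiveRoot ((φ μ) ^ p) n := hζ.pow hNpos (mul_comm n p)
  have hexists : ∀ x : ZMod p, ∃ m : ℕ, x ≠ 0 → ((φ μ) ^ p) ^ m = f x := by
    intro x
    by_cases hx : x = 0
    · exact ⟨0, fun h => absurd hx h⟩
    · obtain ⟨m, -, hm⟩ := hξn.eq_pow_of_pow_eq_one (hf x hx)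
      exact ⟨m, fun _ => hm⟩
  choose k hk using hexists
  set F : ZMod p → L := fun x => if x = 0 then 0 else (μ ^ p) ^ (k x) with hF
  have hφF : ∀ x : ZMod p, φ (F x) = f x := by
    intro x
    by_cases hx : x = 0
    · simp [hF, hx, hf0.symm, hx ▸ hf0]
    · rw [hF]
      simp only [hx, if_neg, ite_false]
      rw [map_pow, map_pow, hk x hx]
  -- abstract sums
  set Sabs : ZMod p → L := fun c => ∑ x : ZMod p, F x * ((μ ^ n) ^ (x.val * c.val * rv))⁻¹
    with hSabs
  set Tabs : ZMod p → L := fun c => ∑ x : ZMod p, (F x)⁻¹ * (μ ^ n) ^ (x.val * c.val * rv)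
    with hTabs
  have hηp : (μ ^ n : L) ^ p = 1 := by
    rw [← pow_mul]; exact hμ.pow_eq_one
  have hωp : (ω₀ : ℂ) ^ p = 1 := hω₀.pow_eq_one
  have hmod_rs : ∀ x c : ZMod p, (x.val * c.val * rv) * s ≡ x.val * c.val [MOD p] := by
    intro x c
    rw [← ZMod.natCast_eq_natCast_iff]
    push_cast
    calc ((x.val : ZMod p) * (c.val : ZMod p) * (rv : ZMod p)) * (s : ZMod p)
        = ((x.val : ZMod p) * (c.val : ZMod p)) * ((s : ZMod p) * (rv : ZMod p)) := by ring
      _ = (x.val : ZMod p) * (c.val : ZMod p) := by rw [hsu, mul_one]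
  have hφpow : ∀ m : ℕ, φ ((μ ^ n) ^ m) = ω₀ ^ (m * s) := by
    intro m
    rw [map_pow, map_pow, ← hs, ← pow_mul, mul_comm s m]
  have hφS : ∀ c : ZMod p, φ (Sabs c) = S c := by
    intro c
    rw [hSabs, hS, map_sum]
    refine Finset.sum_congr rfl fun x _ => ?_
    rw [map_mul, hφF, map_inv₀, hφpow]
    congr 2
    exact pow_congr_mod' hωp (hmod_rs x c)
  have hconj_f : ∀ x : ZMod p, (starRingEnd ℂ) (f x) = (f x)⁻¹ := by
    intro x
    by_cases hx : x = 0
    · simp [hx, hf0]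
    · exact conj_eq_inv_of_pow_eq_one hn.ne' (hf x hx)
  have hφT : ∀ c : ZMod p, φ (Tabs c) = (starRingEnd ℂ) (S c) := by
    intro c
    rw [hTabs, hS, map_sum, map_sum]
    refine Finset.sum_congr rfl fun x _ => ?_
    rw [map_mul, map_inv₀, hφF, hφpow]
    rw [map_mul (starRingEnd ℂ), hconj_f, map_inv₀ (starRingEnd ℂ),
      conj_eq_inv_of_pow_eq_one hp0 (by rw [← pow_mul, mul_comm, pow_mul, hωp, one_pow]), inv_inv]
    congr 1
    exact pow_congr_mod' hωp (hmod_rs x c)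
  -- Galois action
  have hgal : ∀ u : (ZMod p)ˣ, ∀ c : ZMod p,
      ∃ σ : L ≃ₐ[ℚ] L, σ (Sabs c) = Sabs (c * u) ∧ σ (Tabs c) = Tabs (c * u) := by
    intro u c
    set e := ZMod.chineseRemainder hcop with hedef
    set tu : (ZMod n × ZMod p)ˣ := MulEquiv.prodUnits.symm (1, u) with htudef
    set t : (ZMod (n*p))ˣ := Units.map (e.symm.toRingHom.toMonoidHom) tu with htdef
    have htu : (tu : ZMod n × ZMod p) = ((1 : ZMod n), (u : ZMod p)) := rfl
    have hcomp : e (t : ZMod (n*p)) = ((1 : ZMod n), (u : ZMod p)) := by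
      have h1 : (t : ZMod (n*p)) = e.symm (tu : ZMod n × ZMod p) := rfl
      rw [h1, htu, RingEquiv.apply_symm_apply]
    have hcast : ∀ x : ZMod (n*p), e x = (((x.val : ℕ) : ZMod n), ((x.val : ℕ) : ZMod p)) := by
      intro x
      have h1 : e x = ZMod.castHom (show Nat.lcm n p ∣ n * p by simp [Nat.lcm_dvd_iff])
          (ZMod n × ZMod p) x := rfl
      rw [h1, ZMod.castHom_apply, ← ZMod.natCast_val]
      rfl
    have hn1 : ((t : ZMod (n*p)).val : ZMod n) = 1 := by
      have h2 := hcomp; rw [hcast] at h2; exact congrArg Prod.fst h2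
    have hp1 : ((t : ZMod (n*p)).val : ZMod p) = (u : ZMod p) := by
      have h2 := hcomp; rw [hcast] at h2; exact congrArg Prod.snd h2
    have hmod1 : (t : ZMod (n*p)).val ≡ 1 [MOD n] := by
      rw [← ZMod.natCast_eq_natCast_iff]; simpa using hn1
    have hmodu : (t : ZMod (n*p)).val ≡ ((u : ZMod p)).val [MOD p] := by
      rw [← ZMod.natCast_eq_natCast_iff]; simp [hp1, ZMod.natCast_val, ZMod.cast_id]
    set σ : L ≃ₐ[ℚ] L := (IsCyclotomicExtension.autEquivPow L hirr).symm t with hσdef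
    have hσμ : σ μ = μ ^ ((t : ZMod (n*p)).val) := by
      have h1 := hμ.autToPow_spec ℚ σ
      have h2 : hμ.autToPow ℚ σ = t :=
        (IsCyclotomicExtension.autEquivPow L hirr).apply_symm_apply t
      rw [h2] at h1
      exact h1.symm
    have hξ1 : (μ ^ p : L) ^ n = 1 := by rw [← pow_mul, mul_comm]; exact hμ.pow_eq_one
    have hσξ : σ (μ ^ p) = μ ^ p := by
      rw [map_pow, hσμ, ← pow_mul, mul_comm, pow_mul]
      exact (pow_congr_mod' hξ1 hmod1).trans (pow_one _)
    have hσF : ∀ x : ZMod p, σ (F x) = F x := by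
      intro x
      rw [hF]
      by_cases hx : x = 0
      · simp [hx]
      · simp only [hx, ite_false]
        rw [map_pow, hσξ]
    have hση : σ (μ ^ n) = (μ ^ n) ^ (((u : ZMod p)).val) := by
      rw [map_pow, hσμ, ← pow_mul, mul_comm, pow_mul]
      exact pow_congr_mod' hηp hmodu
    have hmodc : ∀ x : ZMod p, ((u : ZMod p)).val * (x.val * c.val * rv)
        ≡ x.val * (c * u : ZMod p).val * rv [MOD p] := by
      intro x
      rw [← ZMod.natCast_eq_natCast_iff]
      push_cast [ZMod.natCast_val, ZMod.cast_id]
      ring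
    refine ⟨σ, ?_, ?_⟩
    · rw [hSabs, map_sum]
      refine Finset.sum_congr rfl fun x _ => ?_
      rw [map_mul, hσF, map_inv₀, map_pow, hση, ← pow_mul, pow_congr_mod' hηp (hmodc x)]
    · rw [hTabs, map_sum]
      refine Finset.sum_congr rfl fun x _ => ?_
      rw [map_mul, map_inv₀, hσF, map_pow, hση, ← pow_mul, pow_congr_mod' hηp (hmodc x)]
  -- key identity at c₀
  have hps : (0:ℝ) ≤ p := Nat.cast_nonneg p
  have hkey : ∀ c : ZMod p, S c * (starRingEnd ℂ) (S c) = (p : ℂ) ↔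
      ‖S c‖ = Real.sqrt p := by
    intro c
    rw [Complex.mul_conj]
    constructor
    · intro h
      have h2 : Complex.normSq (S c) = (p : ℝ) := by exact_mod_cast h
      rw [Complex.norm_def, h2]
    · intro h
      have h2 : Complex.normSq (S c) = (p : ℝ) := by
        rw [← Complex.sq_norm, h, Real.sq_sqrt hps]
      rw [h2]; norm_cast
  have h₀' : Sabs (c₀ : ZMod p) * Tabs (c₀ : ZMod p) = ((p : ℕ) : L) := by
    apply hφinj
    rw [map_mul, hφS, hφT, map_natCast]
    exact (hkey _).mpr h₀
  intro c
  obtain ⟨σ, hσ1, hσ2⟩ := hgal (c₀⁻¹ * c) (c₀ : ZMod p)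
  have hcc : ((c₀ : ZMod p)) * ((c₀⁻¹ * c : (ZMod p)ˣ) : ZMod p) = (c : ZMod p) := by
    rw [← Units.val_mul, mul_inv_cancel_left]
  have h2 : Sabs (c : ZMod p) * Tabs (c : ZMod p) = ((p : ℕ) : L) := by
    have := congrArg σ h₀'
    rw [map_mul, hσ1, hσ2, hcc, map_natCast] at this
    exact this
  apply (hkey _).mp
  have := congrArg φ h2
  rw [map_mul, hφS, hφT, map_natCast] at this
  exact_mod_cast this

/-- Dichotomy corollary: for `f : ℤ/pℤ → ℂ` with `f(0) = 0` valued in `n`-th roots of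
unity on `(ℤ/pℤ)ˣ` with `p ∤ n`, either `|f̂(a)| = 1` for all `a ∈ (ℤ/pℤ)ˣ`, or
`|f̂(a)| ≠ 1` for all such `a`. -/
theorem stmt_7 (p n : ℕ) [Fact p.Prime] (hn : 0 < n) (hpn : ¬ p ∣ n)
    (f : ZMod p → ℂ) (hf0 : f 0 = 0)
    (hf : ∀ x : ZMod p, x ≠ 0 → f x ^ n = 1) :
    (∀ a : (ZMod p)ˣ, ‖((Real.sqrt p : ℂ)⁻¹ *
        ∑ x : ZMod p, f x *
          Complex.exp (-(2 * Real.pi * Complex.I * (x.val : ℂ) * (((a : ZMod p).val : ℂ)) / p)))‖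
      = 1)
    ∨ (∀ a : (ZMod p)ˣ, ‖((Real.sqrt p : ℂ)⁻¹ *
        ∑ x : ZMod p, f x *
          Complex.exp (-(2 * Real.pi * Complex.I * (x.val : ℂ) * (((a : ZMod p).val : ℂ)) / p)))‖
      ≠ 1) := by
  set S : ZMod p → ℂ := fun c => ∑ x : ZMod p,
      f x * (Complex.exp (2 * Real.pi * Complex.I / p) ^ (x.val * c.val))⁻¹ with hSdef
  have hsum : ∀ a : (ZMod p)ˣ, (∑ x : ZMod p, f x *
      Complex.exp (-(2 * Real.pi * Complex.I * (x.val : ℂ) * (((a : ZMod p).val : ℂ)) / p)))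
      = S (a : ZMod p) := by
    intro a
    rw [hSdef]
    refine Finset.sum_congr rfl fun x _ => ?_
    congr 1
    rw [← Complex.exp_nat_mul, ← Complex.exp_neg]
    congr 1
    push_cast
    ring
  have hsqrt_pos : 0 < Real.sqrt p :=
    Real.sqrt_pos.mpr (by exact_mod_cast (Fact.out : p.Prime).pos)
  have habs : ∀ a : (ZMod p)ˣ, ‖((Real.sqrt p : ℂ)⁻¹ *
      ∑ x : ZMod p, f x *
        Complex.exp (-(2 * Real.pi * Complex.I * (x.val : ℂ) * (((a : ZMod p).val : ℂ)) / p)))‖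
      = 1 ↔ ‖S (a : ZMod p)‖ = Real.sqrt p := by
    intro a
    rw [hsum a, norm_mul, norm_inv, Complex.norm_real, Real.norm_eq_abs, _root_.abs_of_nonneg (Real.sqrt_nonneg _),
      inv_mul_eq_one₀ hsqrt_pos.ne']
    exact eq_comm
  by_cases H : ∃ a₀ : (ZMod p)ˣ, ‖((Real.sqrt p : ℂ)⁻¹ *
      ∑ x : ZMod p, f x *
        Complex.exp (-(2 * Real.pi * Complex.I * (x.val : ℂ) * (((a₀ : ZMod p).val : ℂ)) / p)))‖
      = 1
  · left
    obtain ⟨a₀, ha₀⟩ := H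
    have h₀ : ‖S (a₀ : ZMod p)‖ = Real.sqrt p := (habs a₀).mp ha₀
    have hall := main_aux p n hn hpn f hf0 hf S (fun c => rfl) a₀ h₀
    exact fun a => (habs a).mpr (hall a)
  · right
    push_neg at H
    exact H
end

section
/- Let p be prime, n ≥ 1 with p ∤ n, and f : ℤ/pℤ → ℂ with f(0) = 0, f(1) = 1, and f valued in n-th roots of unity on (ℤ/pℤ)ˣ. If |∑_{ℓ} f(ℓ)e^{2πiℓ/p}| = √p, then the autocorrelations satisfy ∑_{x ∈ ℤ/pℤ} f(x)·conj(f(x+h)) = -1 for every h ∈ (ℤ/pℤ)ˣ. -/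
open Complex Polynomial IntermediateField

lemma adjoin_cyclo {μ : ℂ} {m : ℕ+} (hμ : IsPrimitiveRoot μ (m:ℕ)) :
    IsCyclotomicExtension {(m:ℕ)} ℚ (ℚ⟮μ⟯) := by
  have H := IntermediateField.adjoin_simple_toSubalgebra_of_isAlgebraic
    ((hμ.isIntegral m.pos).tower_top (A := ℚ)).isAlgebraic
  refine IsCyclotomicExtension.equiv _ _ _ (h := ?_) (.refl : (ℚ⟮μ⟯).toSubalgebra ≃ₐ[ℚ] _)
  rw [H]
  exact hμ.adjoin_isCyclotomicExtension ℚ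

lemma finrank_adjoin {μ : ℂ} {m : ℕ+} (hμ : IsPrimitiveRoot μ (m:ℕ)) :
    Module.finrank ℚ (ℚ⟮μ⟯) = Nat.totient m := by
  haveI := adjoin_cyclo hμ
  exact IsCyclotomicExtension.finrank (n := (m:ℕ)) (ℚ⟮μ⟯)
    (Polynomial.cyclotomic.irreducible_rat m.pos)

set_option synthInstance.maxHeartbeats 1000000 in
set_option maxHeartbeats 1000000 in
lemma aux_li (p n : ℕ) (hp : p.Prime) (hn : 0 < n) (hpn : ¬ p ∣ n) :
    LinearIndependent (ℚ⟮Complex.exp (2*Real.pi*Complex.I/n)⟯)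
      (fun i : Fin (p-1) => Complex.exp (2*Real.pi*Complex.I/p) ^ (i:ℕ)) := by
  have hp0 : (p:ℕ) ≠ 0 := hp.pos.ne'
  have hn0 : n ≠ 0 := hn.ne'
  set ζn : ℂ := Complex.exp (2*Real.pi*Complex.I/n) with hζn_def
  set ζp : ℂ := Complex.exp (2*Real.pi*Complex.I/p) with hζp_def
  set ζnp : ℂ := Complex.exp (2*Real.pi*Complex.I/(n*p)) with hζnp_def
  have hζn : IsPrimitiveRoot ζn n := Complex.isPrimitiveRoot_exp n hn0
  have hζp : IsPrimitiveRoot ζp p := Complex.isPrimitiveRoot_exp p hp0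
  have hnp0 : n * p ≠ 0 := by positivity
  have hζnp : IsPrimitiveRoot ζnp (n*p) := by
    have := Complex.isPrimitiveRoot_exp (n*p) hnp0
    simpa [Nat.cast_mul] using this
  have hpow_n : ζnp ^ p = ζn := by
    rw [hζnp_def, ← Complex.exp_nat_mul]
    congr 1
    have h1 : (n:ℂ) ≠ 0 := Nat.cast_ne_zero.mpr hn0
    have h2 : (p:ℂ) ≠ 0 := Nat.cast_ne_zero.mpr hp0
    field_simp
  have hpow_p : ζnp ^ n = ζp := by
    rw [hζnp_def, ← Complex.exp_nat_mul]
    congr 1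
    have h1 : (n:ℂ) ≠ 0 := Nat.cast_ne_zero.mpr hn0
    have h2 : (p:ℂ) ≠ 0 := Nat.cast_ne_zero.mpr hp0
    field_simp
  have hco : Nat.Coprime p n := (Nat.Prime.coprime_iff_not_dvd hp).mpr hpn
  -- the adjoin equality
  have hrs : IntermediateField.restrictScalars ℚ ((ℚ⟮ζn⟯)⟮ζp⟯) = ℚ⟮ζnp⟯ := by
    erw [IntermediateField.restrictScalars_adjoin]
    have hζnp0 : ζnp ≠ 0 := hζnp.ne_zero (by positivity)
    apply le_antisymm
    · rw [IntermediateField.adjoin_le_iff]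
      rintro x hx
      rcases hx with hx | hx
      · have hζn_mem : ζn ∈ ℚ⟮ζnp⟯ := by
          rw [← hpow_n]; exact pow_mem (IntermediateField.mem_adjoin_simple_self ℚ ζnp) p
        have : (ℚ⟮ζn⟯ : IntermediateField ℚ ℂ) ≤ ℚ⟮ζnp⟯ := by
          rw [IntermediateField.adjoin_simple_le_iff]; exact hζn_mem
        exact this hx
      · rcases hx with rfl
        rw [← hpow_p]; exact pow_mem (IntermediateField.mem_adjoin_simple_self ℚ ζnp) n
    · rw [IntermediateField.adjoin_simple_le_iff]
      obtain ⟨u, v, huv⟩ : ∃ u v : ℤ, (p:ℤ) * u + (n:ℤ) * v = 1 := by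
        have : IsCoprime (p:ℤ) (n:ℤ) := Int.isCoprime_iff_gcd_eq_one.mpr (by
          simpa [Int.gcd] using hco)
        obtain ⟨a, b, hab⟩ := this
        exact ⟨a, b, by linarith⟩
      have key : ζnp = ζn ^ u * ζp ^ v := by
        rw [← hpow_n, ← hpow_p, ← zpow_natCast ζnp p, ← zpow_natCast ζnp n,
          ← zpow_mul, ← zpow_mul, ← zpow_add₀ hζnp0, huv, zpow_one]
      rw [key]
      have h1 : ζn ∈ IntermediateField.adjoin ℚ (↑(ℚ⟮ζn⟯) ∪ {ζp}) :=
        IntermediateField.subset_adjoin _ _ (Or.inl (IntermediateField.mem_adjoin_simple_self ℚ ζn))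
      have h2 : ζp ∈ IntermediateField.adjoin ℚ (↑(ℚ⟮ζn⟯) ∪ {ζp}) :=
        IntermediateField.subset_adjoin _ _ (Or.inr rfl)
      exact mul_mem (zpow_mem h1 u) (zpow_mem h2 v)
  -- finrank computations
  have hrkK : Module.finrank ℚ (ℚ⟮ζn⟯) = Nat.totient n := finrank_adjoin (m := ⟨n, hn⟩) hζn
  have hrkE : Module.finrank ℚ (ℚ⟮ζnp⟯) = Nat.totient (n*p) :=
    finrank_adjoin (m := ⟨n*p, Nat.pos_of_ne_zero hnp0⟩) hζnp
  have hintK : IsIntegral (ℚ⟮ζn⟯) ζp := ((hζp.isIntegral hp.pos).tower_top (A := ℚ)).tower_top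
  have htower : Module.finrank ℚ (ℚ⟮ζn⟯) * Module.finrank (ℚ⟮ζn⟯) ((ℚ⟮ζn⟯)⟮ζp⟯)
      = Module.finrank ℚ ((ℚ⟮ζn⟯)⟮ζp⟯) := Module.finrank_mul_finrank ℚ (ℚ⟮ζn⟯) ((ℚ⟮ζn⟯)⟮ζp⟯)
  have hEeq : Module.finrank ℚ ((ℚ⟮ζn⟯)⟮ζp⟯) = Nat.totient (n*p) := by
    rw [← hrkE, ← hrs]; rfl
  have htot : Nat.totient (n*p) = Nat.totient n * (p-1) := by
    rw [Nat.totient_mul (Nat.Coprime.symm hco), Nat.totient_prime hp]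
  have hdeg : Module.finrank (ℚ⟮ζn⟯) ((ℚ⟮ζn⟯)⟮ζp⟯) = p - 1 := by
    have h0 : 0 < Nat.totient n := Nat.totient_pos.mpr hn
    have := htower
    rw [hrkK, hEeq, htot] at this
    exact Nat.eq_of_mul_eq_mul_left h0 this
  have hmin : (minpoly (ℚ⟮ζn⟯) ζp).natDegree = p - 1 := by
    rw [← IntermediateField.adjoin.finrank hintK, hdeg]
  have := linearIndependent_pow (K := ℚ⟮ζn⟯) (S := ℂ) ζp
  rw [hmin] at this
  exact this
open Finset in

/-- If `|τ(f)| = √p` for `f : ℤ/pℤ → ℂ` with `f(0) = 0`, `f(1) = 1`, valued in `n`-th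
roots of unity on `(ℤ/pℤ)ˣ` with `p ∤ n`, then all off-diagonal autocorrelations
equal `-1`. -/
theorem stmt_10 (p n : ℕ) [Fact p.Prime] (hn : 0 < n) (hpn : ¬ p ∣ n)
    (f : ZMod p → ℂ) (hf0 : f 0 = 0) (hf1 : f 1 = 1)
    (hf : ∀ x : ZMod p, x ≠ 0 → f x ^ n = 1)
    (hτ : ‖(∑ l : ZMod p,
        f l * Complex.exp (2 * Real.pi * Complex.I * (l.val : ℂ) / p))‖ = Real.sqrt p) :
    ∀ h : (ZMod p)ˣ,
      ∑ x : ZMod p, f x * (starRingEnd ℂ) (f (x + (h : ZMod p))) = -1 := by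
  have hp : p.Prime := Fact.out
  have hp0 : p ≠ 0 := hp.pos.ne'
  haveI : NeZero p := ⟨hp0⟩
  haveI : NeZero n := ⟨hn.ne'⟩
  set ζ : ℂ := Complex.exp (2*Real.pi*Complex.I/p) with hζdef
  have hζ : IsPrimitiveRoot ζ p := Complex.isPrimitiveRoot_exp p hp0
  have hζabs : ‖ζ‖ = 1 := by
    rw [hζdef, show 2*(Real.pi:ℂ)*I/p = ((2*Real.pi/p : ℝ) : ℂ) * I by push_cast; ring]
    exact Complex.norm_exp_ofReal_mul_I _
  set E : ZMod p → ℂ := fun x => ζ ^ x.val with hEdef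
  have hmod : ∀ a : ℕ, ζ ^ (a % p) = ζ ^ a := by
    intro a
    conv_rhs => rw [← Nat.div_add_mod a p]
    rw [pow_add, pow_mul, hζ.pow_eq_one, one_pow, one_mul]
  have hEadd : ∀ x y : ZMod p, E (x+y) = E x * E y := by
    intro x y
    simp only [hEdef]
    rw [ZMod.val_add, hmod, pow_add]
  have hE0 : E 0 = 1 := by simp [hEdef]
  have hEinv : ∀ x : ZMod p, E (-x) * E x = 1 := by
    intro x; rw [← hEadd, neg_add_cancel, hE0]
  have hEconj : ∀ x : ZMod p, (starRingEnd ℂ) (E x) = E (-x) := by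
    intro x
    have hζne : ζ ≠ 0 := by
      intro hz; rw [hz] at hζabs; simp at hζabs
    have h1 : (starRingEnd ℂ) (E x) = (E x)⁻¹ := by
      simp only [hEdef, map_pow]
      rw [← Complex.inv_eq_conj hζabs, inv_pow]
    rw [h1]
    exact (eq_inv_of_mul_eq_one_left (hEinv x)).symm
  -- rewrite hτ
  have hτ' : ‖∑ l : ZMod p, f l * E l‖ = Real.sqrt p := by
    rw [← hτ]
    congr 1
    refine Finset.sum_congr rfl fun l _ => ?_
    congr 1
    simp only [hEdef, hζdef]
    rw [← Complex.exp_nat_mul]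
    congr 1
    ring
  set g : ZMod p → ℂ := fun h => ∑ x : ZMod p, f x * (starRingEnd ℂ) (f (x + h)) with hgdef
  have hτ2 : (∑ l : ZMod p, f l * E l) * (starRingEnd ℂ) (∑ l : ZMod p, f l * E l) = (p:ℂ) := by
    rw [Complex.mul_conj]
    norm_cast
    rw [← Complex.sq_norm, hτ', Real.sq_sqrt (by positivity)]
  have expand : (∑ l : ZMod p, f l * E l) * (starRingEnd ℂ) (∑ l : ZMod p, f l * E l)
      = ∑ h : ZMod p, g h * E (-h) := by
    rw [map_sum, Finset.sum_mul_sum]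
    calc ∑ l : ZMod p, ∑ m : ZMod p, (f l * E l) * ((starRingEnd ℂ) (f m * E m))
        = ∑ l : ZMod p, ∑ h : ZMod p, (f l * (starRingEnd ℂ) (f (l+h))) * E (-h) := by
          refine Finset.sum_congr rfl fun l _ => ?_
          refine (Fintype.sum_equiv (Equiv.addLeft l) _ _ fun h => ?_).symm
          simp only [Equiv.coe_addLeft, map_mul]
          rw [hEconj]
          have : E l * E (-(l+h)) = E (-h) := by
            rw [← hEadd]; congr 1; ring
          calc f l * (starRingEnd ℂ) (f (l + h)) * E (-h)
              = (f l * (starRingEnd ℂ) (f (l + h))) * (E l * E (-(l+h))) := by rw [this]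
            _ = f l * E l * ((starRingEnd ℂ) (f (l + h)) * E (-(l+h))) := by ring
      _ = ∑ h : ZMod p, g h * E (-h) := by
          rw [Finset.sum_comm]
          refine Finset.sum_congr rfl fun h _ => ?_
          rw [hgdef, Finset.sum_mul]
  have key : ∑ h : ZMod p, g h * E (-h) = (p:ℂ) := by rw [← expand, hτ2]
  -- g 0 = p - 1
  have habs1 : ∀ x : ZMod p, x ≠ 0 → f x * (starRingEnd ℂ) (f x) = 1 := by
    intro x hx
    rw [Complex.mul_conj]
    norm_cast
    have h1 : Complex.normSq (f x) ^ n = 1 := by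
      rw [← map_pow, hf x hx, map_one]
    have h2 : (0:ℝ) ≤ Complex.normSq (f x) := Complex.normSq_nonneg _
    rcases lt_trichotomy (Complex.normSq (f x)) 1 with hlt | heq | hgt
    · exact absurd h1 (by nlinarith [pow_lt_one₀ h2 hlt hn.ne'])
    · exact heq
    · exact absurd h1 (by nlinarith [one_lt_pow₀ hgt hn.ne'])
  have hg0 : g 0 = (p:ℂ) - 1 := by
    have h1 : ∀ x : ZMod p, x ∈ (Finset.univ.erase (0 : ZMod p)) →
        f x * (starRingEnd ℂ) (f (x + 0)) = 1 := by
      intro x hx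
      rw [add_zero]
      exact habs1 x (Finset.ne_of_mem_erase hx)
    rw [hgdef]
    simp only
    rw [← Finset.add_sum_erase _ _ (Finset.mem_univ (0 : ZMod p)), hf0]
    rw [Finset.sum_congr rfl h1, Finset.sum_const, Finset.card_erase_of_mem (Finset.mem_univ _)]
    simp [ZMod.card, Nat.cast_sub hp.one_le]
  have key2 : ∑ h ∈ Finset.univ.erase (0 : ZMod p), g h * E (-h) = 1 := by
    have := Finset.add_sum_erase Finset.univ (fun h => g h * E (-h)) (Finset.mem_univ (0 : ZMod p))
    rw [key] at this
    simp only [hg0, neg_zero, hE0, mul_one] at this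
    linear_combination this
  have key3 : ∑ h ∈ Finset.univ.erase (0 : ZMod p), g (-h) * E h = 1 := by
    rw [← key2]
    refine Finset.sum_equiv (Equiv.neg (ZMod p)) (fun i => by simp) (fun i hi => ?_)
    simp only [Equiv.neg_apply, neg_neg]
  -- convert to ℕ-indexed sums
  set c : ℕ → ℂ := fun k => g (-(k : ZMod p)) with hcdef
  have hsum1 : ∑ k ∈ Finset.Ico 1 p, c k * ζ ^ k = 1 := by
    rw [← key3]
    refine (Finset.sum_nbij' (fun h => (h : ZMod p).val) (fun k => ((k:ℕ) : ZMod p))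
      ?_ ?_ ?_ ?_ ?_).symm
    · intro h hh
      have h0 : (h : ZMod p) ≠ 0 := Finset.ne_of_mem_erase hh
      have hv0 : (h:ZMod p).val ≠ 0 := fun hc => h0 (by
        rwa [← ZMod.val_eq_zero])
      exact Finset.mem_Ico.mpr ⟨Nat.one_le_iff_ne_zero.mpr hv0, ZMod.val_lt _⟩
    · intro k hk
      obtain ⟨hk1, hk2⟩ := Finset.mem_Ico.mp hk
      refine Finset.mem_erase.mpr ⟨?_, Finset.mem_univ _⟩
      show ((k:ℕ) : ZMod p) ≠ 0
      intro hc
      have : ((k:ℕ) : ZMod p).val = 0 := by rw [hc, ZMod.val_zero]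
      rw [ZMod.val_cast_of_lt hk2] at this
      omega
    · intro h hh
      simp [ZMod.natCast_val, ZMod.cast_id]
    · intro k hk
      obtain ⟨hk1, hk2⟩ := Finset.mem_Ico.mp hk
      simpa using ZMod.val_cast_of_lt hk2
    · intro h hh
      simp only [hcdef, hEdef, ZMod.natCast_val, ZMod.cast_id]
  -- geometric sum
  set q : ℕ := p - 1 with hqdef
  have hpq : p = q + 1 := by omega
  have hq1 : 1 ≤ q := by have := hp.two_le; omega
  have hgeo : 1 + ∑ k ∈ Finset.Ico 1 q, ζ ^ k + ζ ^ q = 0 := by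
    have h0 := hζ.geom_sum_eq_zero hp.one_lt
    rw [hpq, Finset.sum_range_succ] at h0
    rw [Finset.range_eq_Ico, Finset.sum_eq_sum_Ico_succ_bot (by omega : 0 < q)] at h0
    rw [pow_zero] at h0
    linear_combination h0
  have hsum1' : ∑ k ∈ Finset.Ico 1 q, c k * ζ ^ k = 1 - c q * ζ ^ q := by
    have := hsum1
    rw [hpq, Finset.sum_Ico_succ_top hq1] at this
    linear_combination this
  -- membership in K
  set ζn : ℂ := Complex.exp (2*Real.pi*Complex.I/n) with hζndef
  have hζn : IsPrimitiveRoot ζn n := Complex.isPrimitiveRoot_exp n hn.ne'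
  have hfK : ∀ x : ZMod p, f x ∈ ℚ⟮ζn⟯ := by
    intro x
    by_cases hx : x = 0
    · rw [hx, hf0]; exact zero_mem _
    · obtain ⟨i, -, hi⟩ := hζn.eq_pow_of_pow_eq_one (hf x hx)
      rw [← hi]
      exact pow_mem (IntermediateField.mem_adjoin_simple_self ℚ ζn) i
  have hcfK : ∀ x : ZMod p, (starRingEnd ℂ) (f x) ∈ ℚ⟮ζn⟯ := by
    intro x
    by_cases hx : x = 0
    · rw [hx, hf0, map_zero]; exact zero_mem _
    · have hpow : ((starRingEnd ℂ) (f x)) ^ n = 1 := by rw [← map_pow, hf x hx, map_one]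
      obtain ⟨i, -, hi⟩ := hζn.eq_pow_of_pow_eq_one hpow
      rw [← hi]; exact pow_mem (IntermediateField.mem_adjoin_simple_self ℚ ζn) i
  have hgK : ∀ h : ZMod p, g h ∈ ℚ⟮ζn⟯ := fun h =>
    sum_mem fun x _ => mul_mem (hfK x) (hcfK (x + h))
  have hcK : ∀ k, c k ∈ ℚ⟮ζn⟯ := fun k => hgK _
  set D : ℕ → ℂ := fun k => if k = 0 then (-1 - c q) else c k - c q with hDdef
  have hDK : ∀ k, D k ∈ ℚ⟮ζn⟯ := by
    intro k
    simp only [hDdef]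
    split
    · exact sub_mem (neg_mem (one_mem _)) (hcK q)
    · exact sub_mem (hcK k) (hcK q)
  have hrel : ∑ i : Fin q, D i * ζ ^ (i:ℕ) = 0 := by
    rw [Fin.sum_univ_eq_sum_range (fun k => D k * ζ ^ k) q]
    rw [Finset.range_eq_Ico, Finset.sum_eq_sum_Ico_succ_bot (by omega : 0 < q)]
    have h1 : ∀ k ∈ Finset.Ico 1 q, D k * ζ ^ k = c k * ζ ^ k - c q * ζ ^ k := by
      intro k hk
      obtain ⟨hk1, -⟩ := Finset.mem_Ico.mp hk
      rw [hDdef]; simp only; rw [if_neg (by omega)]; ring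
    rw [Finset.sum_congr rfl h1, Finset.sum_sub_distrib, ← Finset.mul_sum, hsum1']
    simp only [hDdef, if_pos rfl, pow_zero]
    linear_combination -(c q) * hgeo
  have li' : LinearIndependent (ℚ⟮ζn⟯) (fun i : Fin q => ζ ^ (i:ℕ)) := aux_li p n hp hn hpn
  have hzero : ∀ i : Fin q, (⟨D i, hDK i⟩ : ℚ⟮ζn⟯) = 0 := by
    refine Fintype.linearIndependent_iff.mp li' (fun i => ⟨D i, hDK i⟩) ?_
    have hsm : ∀ i : Fin q, (⟨D (i:ℕ), hDK i⟩ : ℚ⟮ζn⟯) • (ζ ^ (i:ℕ)) = D i * ζ ^ (i:ℕ) :=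
      fun i => rfl
    rw [Finset.sum_congr rfl fun i _ => hsm i]
    exact hrel
  have hDzero : ∀ k, k < q → D k = 0 := fun k hk =>
    congrArg Subtype.val (hzero ⟨k, hk⟩)
  have hcq : c q = -1 := by
    have h0 := hDzero 0 (by omega)
    simp only [hDdef, if_pos rfl] at h0
    linear_combination -h0
  have hcall : ∀ k, 1 ≤ k → k ≤ q → c k = -1 := by
    intro k h1 h2
    rcases eq_or_lt_of_le h2 with rfl | hlt
    · exact hcq
    · have h0 := hDzero k hlt
      simp only [hDdef] at h0
      rw [if_neg (show ¬ k = 0 by omega)] at h0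
      rw [← hcq]
      linear_combination h0
  intro hu
  have hne : (hu : ZMod p) ≠ 0 := hu.ne_zero
  show g (↑hu) = -1
  have hneg : -(hu : ZMod p) ≠ 0 := neg_ne_zero.mpr hne
  have hk1 : 1 ≤ (-(hu : ZMod p)).val :=
    Nat.one_le_iff_ne_zero.mpr fun hc => hneg ((ZMod.val_eq_zero _).mp hc)
  have hk2 : (-(hu : ZMod p)).val ≤ q := by
    have := ZMod.val_lt (-(hu : ZMod p)); omega
  have hgk : c ((-(hu : ZMod p)).val) = g ↑hu := by
    simp only [hcdef, ZMod.natCast_val, ZMod.cast_id, neg_neg]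
  rw [← hgk]
  exact hcall _ hk1 hk2
end

section
/- The only function g : (ℤ/pℤ)ˣ → {±1} whose Gauss sum τ(g) = ∑_{a ∈ (ℤ/pℤ)ˣ} g(a)e^{2πia/p} equals 1 is the constant function g ≡ -1. -/
open Polynomial Finset

/-- The only function `g : (ℤ/pℤ)ˣ → {±1}` with Gauss sum equal to `1` is the constant
function `g ≡ -1`. -/
theorem stmt_11 (p : ℕ) [Fact p.Prime]
    (g : (ZMod p)ˣ → ℂ) (hg : ∀ a : (ZMod p)ˣ, g a = 1 ∨ g a = -1) :
    (∑ a : (ZMod p)ˣ,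
        g a * Complex.exp (2 * Real.pi * Complex.I * ((a : ZMod p).val : ℂ) / p)) = 1
    ↔ ∀ a : (ZMod p)ˣ, g a = -1 := by
  have hp : p.Prime := Fact.out
  haveI : NeZero p := ⟨hp.ne_zero⟩
  set ζ : ℂ := Complex.exp (2 * Real.pi * Complex.I / p) with hζdef
  have hζ : IsPrimitiveRoot ζ p := Complex.isPrimitiveRoot_exp p hp.ne_zero
  have hexp : ∀ a : (ZMod p)ˣ,
      Complex.exp (2 * Real.pi * Complex.I * ((a : ZMod p).val : ℂ) / p)
        = ζ ^ (a : ZMod p).val := by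
    intro a
    rw [hζdef, ← Complex.exp_nat_mul]
    congr 1
    ring
  -- total sum of all p-th roots
  have htot : ∑ x : ZMod p, ζ ^ x.val = 0 := by
    rw [Finset.sum_nbij' (i := fun x : ZMod p => x.val) (j := fun i : ℕ => (i : ZMod p))
      (t := Finset.range p) (g := fun i => ζ ^ i)]
    · exact hζ.geom_sum_eq_zero hp.one_lt
    · intro a _; exact Finset.mem_range.2 (ZMod.val_lt a)
    · intro a _; exact Finset.mem_univ _
    · intro a _; simp [ZMod.natCast_val, ZMod.cast_id]
    · intro a ha; exact ZMod.val_cast_of_lt (Finset.mem_range.1 ha)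
    · intro a _; rfl
  have hne : ((0 : ZMod p)) ∈ (Finset.univ : Finset (ZMod p)) := Finset.mem_univ _
  have hsplit : ∑ x : ZMod p, ζ ^ x.val
      = ζ ^ (0 : ZMod p).val + ∑ x ∈ Finset.univ.erase (0 : ZMod p), ζ ^ x.val :=
    (Finset.add_sum_erase _ _ hne).symm
  have hunits : ∀ F : ZMod p → ℂ,
      ∑ a : (ZMod p)ˣ, F (a : ZMod p) = ∑ x ∈ Finset.univ.erase (0 : ZMod p), F x := by
    intro F
    apply Finset.sum_nbij' (i := fun a : (ZMod p)ˣ => (a : ZMod p))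
      (j := fun x : ZMod p => if h : x = 0 then 1 else Units.mk0 x h)
    · intro a _; exact Finset.mem_erase.2 ⟨a.ne_zero, Finset.mem_univ _⟩
    · intro a _; exact Finset.mem_univ _
    · intro a _
      simp [a.ne_zero, Units.ext_iff]
    · intro x hx
      have hx0 : x ≠ 0 := (Finset.mem_erase.1 hx).1
      simp [hx0]
    · intro a _; rfl
  have hsum1 : ∑ a : (ZMod p)ˣ, ζ ^ (a : ZMod p).val = -1 := by
    have := hunits (fun x => ζ ^ x.val)
    rw [this]
    have h0 : ζ ^ (0 : ZMod p).val = 1 := by simp [ZMod.val_zero]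
    rw [hsplit, h0] at htot
    linear_combination htot
  simp only [hexp]
  constructor
  · intro hS
    set f : (ZMod p)ˣ → ℚ := fun a => if g a = 1 then 2 else 0 with hf
    have hfc : ∀ a, ((f a : ℚ) : ℂ) = g a + 1 := by
      intro a
      rcases hg a with h | h
      · simp [hf, h]; norm_num
      · have hne1 : g a ≠ 1 := by rw [h]; intro hc; norm_num at hc
        simp [hf, h, hne1]
        norm_num
    set Q : ℚ[X] := ∑ a : (ZMod p)ˣ, C (f a) * X ^ (a : ZMod p).val with hQ
    have hQζ : aeval ζ Q = 0 := by
      rw [hQ]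
      simp only [map_sum, map_mul, aeval_C, aeval_X_pow]
      calc ∑ a : (ZMod p)ˣ, (algebraMap ℚ ℂ) (f a) * ζ ^ (a : ZMod p).val
          = ∑ a : (ZMod p)ˣ, (g a + 1) * ζ ^ (a : ZMod p).val := by
            refine Finset.sum_congr rfl fun a _ => ?_
            rw [show (algebraMap ℚ ℂ) (f a) = ((f a : ℚ) : ℂ) from rfl, hfc a]
        _ = (∑ a : (ZMod p)ˣ, g a * ζ ^ (a : ZMod p).val)
              + ∑ a : (ZMod p)ˣ, ζ ^ (a : ZMod p).val := by
            rw [← Finset.sum_add_distrib]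
            exact Finset.sum_congr rfl fun a _ => by ring
        _ = 0 := by rw [hS, hsum1]; ring
    have hQ0 : Q = 0 := by
      have hint : IsIntegral ℚ ζ := (hζ.isIntegral hp.pos).tower_top
      have hdvd : minpoly ℚ ζ ∣ Q := minpoly.dvd ℚ ζ hQζ
      rw [← cyclotomic_eq_minpoly_rat hζ hp.pos] at hdvd
      obtain ⟨q, hq⟩ := hdvd
      have hcyc_deg : (cyclotomic p ℚ).natDegree = p - 1 := by
        rw [natDegree_cyclotomic, Nat.totient_prime hp]
      have hdegQ : Q.natDegree ≤ p - 1 := by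
        rw [hQ]
        refine Polynomial.natDegree_sum_le_of_forall_le _ _ fun a _ => ?_
        exact le_trans (natDegree_C_mul_X_pow_le _ _)
          (Nat.le_sub_one_of_lt (ZMod.val_lt _))
      have hQc0 : Q.coeff 0 = 0 := by
        rw [hQ, finset_sum_coeff]
        refine Finset.sum_eq_zero fun a _ => ?_
        rw [coeff_C_mul, coeff_X_pow]
        have hv : (a : ZMod p).val ≠ 0 := by
          rw [Ne, ZMod.val_eq_zero]; exact a.ne_zero
        rw [if_neg (fun h => hv h.symm), mul_zero]
      by_cases hQz : Q = 0
      · exact hQz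
      · have hqz : q ≠ 0 := fun h => hQz (by rw [hq, h, mul_zero])
        have hdeg : Q.natDegree = (p - 1) + q.natDegree := by
          rw [hq, natDegree_mul (cyclotomic_ne_zero p ℚ) hqz, hcyc_deg]
        have hq0 : q.natDegree = 0 := by omega
        have hqC : q = C (q.coeff 0) := eq_C_of_natDegree_eq_zero hq0
        have hqc : q.coeff 0 = 0 := by
          have h0 : Q.coeff 0 = (cyclotomic p ℚ).coeff 0 * q.coeff 0 := by
            rw [hq, mul_coeff_zero]
          rw [hQc0, cyclotomic_coeff_zero ℚ hp.one_lt, one_mul] at h0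
          exact h0.symm
        rw [hq, hqC, hqc, map_zero, mul_zero]
    intro a
    have hfa : f a = 0 := by
      have hc := congrArg (fun q : ℚ[X] => q.coeff (a : ZMod p).val) hQ0
      simp only [hQ, finset_sum_coeff, coeff_C_mul, coeff_X_pow, coeff_zero] at hc
      rw [Finset.sum_eq_single a] at hc
      · simpa using hc
      · intro b _ hb
        have : (b : ZMod p).val ≠ (a : ZMod p).val := by
          intro hv
          exact hb (Units.ext (ZMod.val_injective p hv))
        rw [if_neg (fun h => this h.symm), mul_zero]
      · intro h; exact absurd (Finset.mem_univ a) h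
    have : g a ≠ 1 := by
      intro h1
      rw [hf] at hfa
      simp [h1] at hfa
    exact (hg a).resolve_left this
  · intro h
    simp only [h, neg_one_mul]
    rw [Finset.sum_neg_distrib, hsum1, neg_neg]
end

section
/- For p = 3, the function f : (ℤ/3ℤ)ˣ → ℂˣ defined by f(1) = 1 and f(2) = e^{2πi·5/6} satisfies |τ(f)| = √3 but is not a multiplicative character, showing that the hypothesis p ∤ n in the converse-to-Gauss theorem is necessary. -/
/-- For `p = 3`, the function with `f(1) = 1`, `f(2) = e^{2πi·5/6}` has `|τ(f)| = √3`
but is not a multiplicative character: the hypothesis `p ∤ n` is necessary. -/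
theorem stmt_12 (f : (ZMod 3)ˣ → ℂ)
    (hf : ∀ a : (ZMod 3)ˣ, f a =
      if (a : ZMod 3) = 1 then 1 else Complex.exp (2 * Real.pi * Complex.I * (5 / 6))) :
    ‖(∑ a : (ZMod 3)ˣ,
        f a * Complex.exp (2 * Real.pi * Complex.I * ((a : ZMod 3).val : ℂ) / 3))‖
      = Real.sqrt 3
    ∧ ¬ ∃ χ : (ZMod 3)ˣ →* ℂˣ, ∀ a : (ZMod 3)ˣ, f a = χ a := by
  constructor
  · have huniv : (Finset.univ : Finset (ZMod 3)ˣ) = {1, -1} := by decide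
    rw [huniv, Finset.sum_pair (by decide : (1 : (ZMod 3)ˣ) ≠ -1)]
    rw [hf 1, hf (-1)]
    have e1 : ((1 : (ZMod 3)ˣ) : ZMod 3) = 1 := by decide
    have e2 : ((-1 : (ZMod 3)ˣ) : ZMod 3) ≠ 1 := by decide
    have v1 : ((1 : (ZMod 3)ˣ) : ZMod 3).val = 1 := by decide
    have v2 : ((-1 : (ZMod 3)ˣ) : ZMod 3).val = 2 := by decide
    rw [if_pos e1, if_neg e2, v1, v2, one_mul, ← Complex.exp_add]
    have hb : 2 * (Real.pi:ℂ) * Complex.I * (5 / 6) + 2 * Real.pi * Complex.I * (2:ℕ) / 3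
        = Real.pi * Complex.I + 2 * Real.pi * Complex.I := by push_cast; ring
    rw [hb, Complex.exp_add, Complex.exp_pi_mul_I, Complex.exp_two_pi_mul_I, mul_one]
    have h : (2 * Real.pi * Complex.I * (1:ℕ) / 3) = ((2 * Real.pi / 3 : ℝ) : ℂ) * Complex.I := by
      push_cast; ring
    have hc : Real.cos (2 * Real.pi / 3) = -(1/2) := by
      have h3 : 2 * Real.pi / 3 = Real.pi - Real.pi / 3 := by ring
      rw [h3, Real.cos_pi_sub, Real.cos_pi_div_three]
    have hs : Real.sin (2 * Real.pi / 3) = Real.sqrt 3 / 2 := by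
      have h3 : 2 * Real.pi / 3 = Real.pi - Real.pi / 3 := by ring
      rw [h3, Real.sin_pi_sub, Real.sin_pi_div_three]
    rw [h, Complex.exp_mul_I, ← Complex.ofReal_cos, ← Complex.ofReal_sin, hc, hs]
    rw [Complex.norm_def, Complex.normSq_apply]
    simp
    rw [show (-(2:ℝ)⁻¹ + -1) * (-2⁻¹ + -1) + Real.sqrt 3 / 2 * (Real.sqrt 3 / 2)
        = 9/4 + (Real.sqrt 3 * Real.sqrt 3)/4 by ring,
      Real.mul_self_sqrt (by norm_num)]
    norm_num
  · rintro ⟨χ, h⟩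
    have hsq : (f (-1))^2 = 1 := by
      rw [h (-1)]
      have : (χ (-1))^2 = 1 := by
        rw [← map_pow]
        norm_num
      calc ((χ (-1) : ℂˣ) : ℂ)^2 = ((χ (-1))^2 : ℂˣ) := by push_cast; ring
        _ = 1 := by rw [this]; rfl
    rw [hf (-1), if_neg (by decide : ((-1 : (ZMod 3)ˣ) : ZMod 3) ≠ 1),
      ← Complex.exp_nat_mul, Complex.exp_eq_one_iff] at hsq
    obtain ⟨n, hn⟩ := hsq
    have hpi : (Real.pi : ℂ) ≠ 0 := by
      exact_mod_cast Real.pi_ne_zero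
    field_simp at hn
    have h20 : (20:ℂ) * ((Real.pi:ℂ) * Complex.I) = (12 * (n:ℂ)) * ((Real.pi:ℂ) * Complex.I) := by
      linear_combination (2 * (Real.pi:ℂ) * Complex.I) * hn
    have h2 := mul_right_cancel₀ (mul_ne_zero hpi Complex.I_ne_zero) h20
    have h3 : (20:ℤ) = 12 * n := by exact_mod_cast h2
    omega
end
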